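/- Let λ ∈ ℝ, let b₂(x) = (1/6)·x·(1-x)³, let a₂ = b₂'''' + λ b₂'', and set σ_n = -n⁴π⁴ + λ n²π² for integer n ≥ 1. Then for every integer n ≥ 1, ∫₀¹ a₂(x)·√2 sin(nπx) dx + σ_n ∫₀¹ b₂(x)·√2 sin(nπx) dx = -√2·nπ. In particular the projected control coefficient β_{2,n} = a_{2,n} + σ_n b_{2,n} equals -√2 nπ and is nonzero for every n ≥ 1. -/

import Mathlib

open Real

private lemma hquart (a b c d e x : ℝ) :
    HasDerivAt (fun x : ℝ => a + b*x + c*x^2 + d*x^3 + e*x^4)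
      (b + 2*c*x + 3*d*x^2 + 4*e*x^3) x := by
  have h := ((((hasDerivAt_const x a).add ((hasDerivAt_pow 1 x).const_mul b)).add
      ((hasDerivAt_pow 2 x).const_mul c)).add
      ((hasDerivAt_pow 3 x).const_mul d)).add ((hasDerivAt_pow 4 x).const_mul e)
  have heq : (fun x : ℝ => a + b*x + c*x^2 + d*x^3 + e*x^4)
      = fun x : ℝ => (((a + b*x^1) + c*x^2) + d*x^3) + e*x^4 := by
    funext y; ring
  rw [heq]
  refine h.congr_deriv ?_
  push_cast
  ring

/-- For the lifting profile b₂(x) = x(1-x)³/6 and a₂ = b₂'''' + λ b₂'',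
    the projected control coefficient β_{2,n} = a_{2,n} + σₙ b_{2,n} equals -√2 nπ ≠ 0. -/
theorem projected_control_coefficient_second_channel (lam : ℝ) (n : ℕ) (hn : 1 ≤ n) :
    ((∫ x in (0:ℝ)..1,
        (iteratedDeriv 4 (fun x : ℝ => (1/6) * x * (1 - x)^3) x
          + lam * iteratedDeriv 2 (fun x : ℝ => (1/6) * x * (1 - x)^3) x)
          * (Real.sqrt 2 * Real.sin (n * π * x)))
      + (-(n : ℝ)^4 * π^4 + lam * (n : ℝ)^2 * π^2) *
          ∫ x in (0:ℝ)..1, ((1/6) * x * (1 - x)^3) * (Real.sqrt 2 * Real.sin (n * π * x))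
      = -Real.sqrt 2 * n * π)
    ∧ -Real.sqrt 2 * (n : ℝ) * π ≠ 0 := by
  constructor
  · -- compute the iterated derivatives
    have e1 : (fun x : ℝ => (1/6) * x * (1 - x)^3)
        = fun x : ℝ => 0 + (1/6)*x + (-(1/2))*x^2 + (1/2)*x^3 + (-(1/6))*x^4 := by
      funext y; ring
    have hd1 : deriv (fun x : ℝ => (1/6) * x * (1 - x)^3)
        = fun x : ℝ => (1/6) + (-1)*x + (3/2)*x^2 + (-(2/3))*x^3 + 0*x^4 := by
      funext x
      rw [e1, (hquart 0 (1/6) (-(1/2)) (1/2) (-(1/6)) x).deriv]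
      ring
    have hd2 : deriv (fun x : ℝ => (1/6) + (-1)*x + (3/2)*x^2 + (-(2/3))*x^3 + 0*x^4)
        = fun x : ℝ => (-1) + 3*x + (-2)*x^2 + 0*x^3 + 0*x^4 := by
      funext x
      rw [(hquart (1/6) (-1) (3/2) (-(2/3)) 0 x).deriv]
      ring
    have hd3 : deriv (fun x : ℝ => (-1) + 3*x + (-2)*x^2 + 0*x^3 + 0*x^4)
        = fun x : ℝ => 3 + (-4)*x + 0*x^2 + 0*x^3 + 0*x^4 := by
      funext x
      rw [(hquart (-1) 3 (-2) 0 0 x).deriv]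
      ring
    have hd4 : deriv (fun x : ℝ => (3:ℝ) + (-4)*x + 0*x^2 + 0*x^3 + 0*x^4)
        = fun _ : ℝ => (-4 : ℝ) := by
      funext x
      rw [(hquart 3 (-4) 0 0 0 x).deriv]
      ring
    have h2 : iteratedDeriv 2 (fun x : ℝ => (1/6) * x * (1 - x)^3)
        = fun x : ℝ => (-1) + 3*x + (-2)*x^2 + 0*x^3 + 0*x^4 := by
      rw [iteratedDeriv_succ, iteratedDeriv_one, hd1, hd2]
    have h4 : iteratedDeriv 4 (fun x : ℝ => (1/6) * x * (1 - x)^3)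
        = fun _ : ℝ => (-4 : ℝ) := by
      rw [iteratedDeriv_succ, iteratedDeriv_succ, h2, hd3, hd4]
    simp only [h2, h4]
    -- combine the two integrals
    have hσ := (-(n : ℝ)^4 * π^4 + lam * (n : ℝ)^2 * π^2)
    have hint1 : IntervalIntegrable
        (fun x : ℝ => ((-4 : ℝ) + lam * ((-1) + 3*x + (-2)*x^2 + 0*x^3 + 0*x^4))
          * (Real.sqrt 2 * Real.sin (n * π * x))) MeasureTheory.volume 0 1 := by
      apply Continuous.intervalIntegrable
      fun_prop
    have hint2 : IntervalIntegrable
        (fun x : ℝ => (-(n : ℝ)^4 * π^4 + lam * (n : ℝ)^2 * π^2) *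
          (((1/6) * x * (1 - x)^3) * (Real.sqrt 2 * Real.sin (n * π * x))))
        MeasureTheory.volume 0 1 := by
      apply Continuous.intervalIntegrable
      fun_prop
    rw [← intervalIntegral.integral_const_mul, ← intervalIntegral.integral_add hint1 hint2]
    -- explicit antiderivative
    set k : ℝ := (n : ℝ) * π with hk
    have hF : ∀ x ∈ Set.uIcc (0:ℝ) 1,
        HasDerivAt (fun x : ℝ => Real.sqrt 2 *
          ((k + (-3*k + (k^3 - lam*k)/6)*x + (2*k - (k^3 - lam*k)/2)*x^2
              + ((k^3 - lam*k)/2)*x^3 + (-(k^3 - lam*k)/6)*x^4) * Real.cos (k * x)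
           + ((3 + (lam - k^2)/6) + (-4 - (lam - k^2))*x + ((3/2)*(lam - k^2))*x^2
              + (-(2/3)*(lam - k^2))*x^3 + 0*x^4) * Real.sin (k * x)))
          (((-4 : ℝ) + lam * ((-1) + 3*x + (-2)*x^2 + 0*x^3 + 0*x^4))
              * (Real.sqrt 2 * Real.sin (k * x))
            + (-(n : ℝ)^4 * π^4 + lam * (n : ℝ)^2 * π^2) *
              (((1/6) * x * (1 - x)^3) * (Real.sqrt 2 * Real.sin (k * x)))) x := by
      intro x _
      have hkx : HasDerivAt (fun y : ℝ => k * y) k x := by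
        simpa using (hasDerivAt_id x).const_mul k
      have hA := hquart k (-3*k + (k^3 - lam*k)/6) (2*k - (k^3 - lam*k)/2)
        ((k^3 - lam*k)/2) (-(k^3 - lam*k)/6) x
      have hB := hquart (3 + (lam - k^2)/6) (-4 - (lam - k^2)) ((3/2)*(lam - k^2))
        (-(2/3)*(lam - k^2)) 0 x
      have h := ((hA.mul hkx.cos).add (hB.mul hkx.sin)).const_mul (Real.sqrt 2)
      refine h.congr_deriv ?_
      rw [hk]
      ring
    rw [intervalIntegral.integral_eq_sub_of_hasDerivAt hF (by
      apply Continuous.intervalIntegrable; fun_prop)]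
    simp only [hk, mul_one, mul_zero, Real.sin_nat_mul_pi, Real.cos_zero, Real.sin_zero,
      one_pow, zero_pow]
    ring
  · have h2 : Real.sqrt 2 ≠ 0 := by positivity
    have hn' : (n : ℝ) ≠ 0 := Nat.cast_ne_zero.mpr (by omega)
    exact mul_ne_zero (mul_ne_zero (neg_ne_zero.mpr h2) hn') Real.pi_ne_zero
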